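/- arXiv:1011.1528 — 2 statements merged into one kernel-verified Lean document; each statement's English description precedes it below -/
import Mathlib

section
/- Let K be a commutative ring with unity and A a finite alphabet. Then the kernel of λ equals the orthogonal complement L_K(A)^⊥ of the free Lie algebra with respect to the canonical scalar product; in particular, a word w ∈ A* satisfies λ(w) = 0 if and only if w does not lie in the support of L_K(A). -/
open scoped BigOperators
open Classical

attribute [local instance 100] LieRing.ofAssociativeRing

noncomputable section

/-- The free associative algebra `K⟨A⟩` on the alphabet `A`, realized as the monoid algebra
of the free monoid on `A`. -/
abbrev NC (K A : Type*) [CommRing K] : Type _ := MonoidAlgebra K (FreeMonoid A)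

variable (K A : Type*) [CommRing K]

/-- The monomial (word) `w` viewed as an element of `K⟨A⟩`. -/
def wp (w : List A) : NC K A := MonoidAlgebra.single (FreeMonoid.ofList w) 1

/-- The coefficient `(P, w)` of the word `w` in the polynomial `P`. -/
def coeffW (P : NC K A) (w : List A) : K := P.coeff (FreeMonoid.ofList w)

/-- The canonical scalar product `(P, Q) = ∑_w (P, w)(Q, w)` on `K⟨A⟩`. -/
def sp (P Q : NC K A) : K := Finsupp.sum P.coeff fun w c => c * Q.coeff w

/-- The free Lie algebra `L_K(A)`: the Lie subalgebra of `K⟨A⟩` (with the commutator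
bracket) generated by the letters. -/
def freeLie : LieSubalgebra K (NC K A) :=
  LieSubalgebra.lieSpan K (NC K A) (Set.range fun a : A => wp K A [a])

/-- The adjoint `λ` of the left-normed Lie bracketing, on words:
`λ(ε) = 0`, `λ(a) = a`, `λ(aub) = λ(au)b − λ(ub)a`. -/
def lam : List A → NC K A
  | [] => 0
  | [a] => wp K A [a]
  | a :: b :: t =>
      lam (a :: (b :: t).dropLast) * wp K A [(b :: t).getLast (by simp)] -
        lam (b :: t) * wp K A [a]
  termination_by w => w.length
  decreasing_by
    all_goals simp [List.length_dropLast]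

/-- `λ` extended linearly to the whole of `K⟨A⟩`. -/
def lamLin : NC K A →ₗ[K] NC K A :=
  (Finsupp.linearCombination K fun w : FreeMonoid A => lam K A (FreeMonoid.toList w)) ∘ₗ
    (MonoidAlgebra.coeffLinearEquiv K).toLinearMap

/-- The shuffle product of two words, as an element of `K⟨A⟩`. -/
def shuffleW : List A → List A → NC K A
  | [], v => wp K A v
  | u, [] => wp K A u
  | a :: u, b :: v =>
      wp K A [a] * shuffleW u (b :: v) + wp K A [b] * shuffleW (a :: u) v
  termination_by u v => u.length + v.length
  decreasing_by
    all_goals simp [Nat.lt_succ_iff]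

/-- The shuffle product on `K⟨A⟩`, extended bilinearly. -/
def sh (P Q : NC K A) : NC K A :=
  Finsupp.sum P.coeff fun u cu =>
    Finsupp.sum Q.coeff fun v cv =>
      (cu * cv) • shuffleW K A (FreeMonoid.toList u) (FreeMonoid.toList v)

/-- The right residual `P ▷ q` of `P` by a word `q`: `(P ▷ q, w) = (P, qw)`. -/
def rresW (P : NC K A) (q : List A) : NC K A :=
  Finsupp.sum P.coeff fun u c =>
    if q <+: FreeMonoid.toList u then c • wp K A ((FreeMonoid.toList u).drop q.length) else 0

/-- The right residual `P ▷ Q`: `(P ▷ Q, w) = (P, Qw)`. -/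
def rres (P Q : NC K A) : NC K A :=
  Finsupp.sum Q.coeff fun v c => c • rresW K A P (FreeMonoid.toList v)

/-- Auxiliary left residual by a word `q`: `(q ◁ P, w) = (P, wq)`. -/
def lresW (P : NC K A) (q : List A) : NC K A :=
  Finsupp.sum P.coeff fun u c =>
    if q <:+ FreeMonoid.toList u then
      c • wp K A ((FreeMonoid.toList u).take ((FreeMonoid.toList u).length - q.length))
    else 0

/-- The left residual `Q ◁ P`: `(Q ◁ P, w) = (P, wQ)`. -/
def lres (Q P : NC K A) : NC K A :=
  Finsupp.sum Q.coeff fun v c => c • lresW K A P (FreeMonoid.toList v)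

/-- The number of trailing occurrences of the letter `a` in the word `v`. -/
def trailCount (a : A) (v : FreeMonoid A) : ℕ :=
  ((FreeMonoid.toList v).reverse.takeWhile fun x => decide (x = a)).length

/-- `d(P)`: the least number of trailing `a`'s among the words in the support of `P`. -/
def dP (a : A) (P : NC K A) : ℕ :=
  sInf {n : ℕ | ∃ v ∈ Finsupp.support P.coeff, trailCount A a v = n}

/-- `e(P)`: the largest number of trailing `a`'s among the words in the support of `P`. -/
def eP (a : A) (P : NC K A) : ℕ :=
  Finset.sup (Finsupp.support P.coeff) (trailCount A a)

/-- The polynomial `P_i` in the decomposition `P = ∑ P_i b a^i`: it collects (and strips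
the suffix `b a^i` from) the monomials of `P` with exactly `i` trailing `a`'s. -/
def partBA (a b : A) (i : ℕ) (P : NC K A) : NC K A :=
  Finsupp.sum P.coeff fun v c =>
    if (FreeMonoid.toList v).reverse.take (i + 1) = List.replicate i a ++ [b] then
      c • wp K A ((FreeMonoid.toList v).take ((FreeMonoid.toList v).length - (i + 1)))
    else 0

/-- A word is Lyndon if it is nonempty and strictly smaller, in the lexicographic order,
than each of its proper nonempty right factors. -/
def IsLyndon {A : Type*} [LinearOrder A] (w : List A) : Prop :=
  w ≠ [] ∧ ∀ s t : List A, w = t ++ s → t ≠ [] → s ≠ [] → List.Lex (· < ·) w s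

/-- `γ(w)`: the nonnegative generator of the ideal `{(P, w) : P ∈ L_ℤ(A)}` of `ℤ`. -/
def gammaW (A : Type*) (w : List A) : ℤ :=
  haveI : (Ideal.span {c : ℤ | ∃ P ∈ freeLie ℤ A, coeffW ℤ A P w = c}).IsPrincipal :=
    IsPrincipalIdealRing.principal _
  (Submodule.IsPrincipal.generator
    (Ideal.span {c : ℤ | ∃ P ∈ freeLie ℤ A, coeffW ℤ A P w = c})).natAbs

end
noncomputable section AuxProof
variable (K A : Type*) [CommRing K]

lemma wp_apply (u v : List A) : (wp K A u).coeff (FreeMonoid.ofList v) = if v = u then 1 else 0 := by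
  classical
  rw [wp, MonoidAlgebra.coeff_single, Finsupp.single_apply]
  simp only [Equiv.apply_eq_iff_eq]
  exact if_congr eq_comm rfl rfl

lemma coeff_mul_letter (P : NC K A) (b : A) (v : List A) :
    (P * wp K A [b]).coeff (FreeMonoid.ofList (v ++ [b])) = P.coeff (FreeMonoid.ofList v) := by
  rw [FreeMonoid.ofList_append]
  simpa [wp] using MonoidAlgebra.coeff_mul_single_eq_coeff_mul (x := P)
    (m := FreeMonoid.ofList [b]) (m₂ := FreeMonoid.ofList v) (r := (1 : K)) fun g _ => mul_left_inj _

lemma coeff_mul_letter_ne (P : NC K A) {a b : A} (h : a ≠ b) (v : List A) :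
    (P * wp K A [b]).coeff (FreeMonoid.ofList (v ++ [a])) = 0 := by
  refine MonoidAlgebra.mul_single_apply_of_not_exists_mul _ _ ?_
  rintro ⟨d, hd⟩
  have := congrArg (fun l : FreeMonoid A => (FreeMonoid.toList l).getLast?) hd
  simp [FreeMonoid.toList_mul] at this
  exact h this

lemma coeff_mul_letter_nil (P : NC K A) (b : A) :
    (P * wp K A [b]).coeff (FreeMonoid.ofList []) = 0 := by
  refine MonoidAlgebra.mul_single_apply_of_not_exists_mul _ _ ?_
  rintro ⟨d, hd⟩
  have := congrArg (fun l : FreeMonoid A => (FreeMonoid.toList l).length) hd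
  simp [FreeMonoid.toList_mul] at this

lemma coeff_letter_mul (P : NC K A) (b : A) (v : List A) :
    (wp K A [b] * P).coeff (FreeMonoid.ofList (b :: v)) = P.coeff (FreeMonoid.ofList v) := by
  have : FreeMonoid.ofList (b :: v) = FreeMonoid.ofList [b] * FreeMonoid.ofList v := rfl
  rw [this]
  simpa [wp] using MonoidAlgebra.coeff_single_mul_eq_mul_coeff (x := P)
    (m := FreeMonoid.ofList [b]) (m₂ := FreeMonoid.ofList v) (r := (1 : K)) fun g _ => mul_right_inj _

lemma coeff_letter_mul_ne (P : NC K A) {a b : A} (h : a ≠ b) (v : List A) :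
    (wp K A [b] * P).coeff (FreeMonoid.ofList (a :: v)) = 0 := by
  refine MonoidAlgebra.single_mul_apply_of_not_exists_mul _ _ ?_
  rintro ⟨d, hd⟩
  have := congrArg (fun l : FreeMonoid A => (FreeMonoid.toList l).head?) hd
  simp [FreeMonoid.toList_mul] at this
  exact h this

lemma coeff_letter_mul_nil (P : NC K A) (b : A) :
    (wp K A [b] * P).coeff (FreeMonoid.ofList []) = 0 := by
  refine MonoidAlgebra.single_mul_apply_of_not_exists_mul _ _ ?_
  rintro ⟨d, hd⟩
  have := congrArg (fun l : FreeMonoid A => (FreeMonoid.toList l).length) hd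
  simp [FreeMonoid.toList_mul] at this

/-- reversed left-normed bracketing -/
def ellR : List A → NC K A
  | [] => 0
  | [a] => wp K A [a]
  | a :: b :: t => ellR (b :: t) * wp K A [a] - wp K A [a] * ellR (b :: t)

/-- the left-normed Lie bracketing ℓ -/
def ell (v : List A) : NC K A := ellR K A v.reverse

lemma ell_nil : ell K A [] = 0 := rfl

lemma ell_single (a : A) : ell K A [a] = wp K A [a] := rfl

lemma ell_concat {v : List A} (hv : v ≠ []) (a : A) :
    ell K A (v ++ [a]) = ell K A v * wp K A [a] - wp K A [a] * ell K A v := by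
  obtain ⟨b, t, hbt⟩ : ∃ b t, v.reverse = b :: t := by
    cases h : v.reverse with
    | nil => exact absurd (List.reverse_eq_nil_iff.mp h) hv
    | cons b t => exact ⟨b, t, rfl⟩
  unfold ell
  rw [List.reverse_append, List.reverse_singleton, List.singleton_append, hbt]
  rfl

lemma ell_coeff_nil (v : List A) : (ell K A v).coeff (FreeMonoid.ofList []) = 0 := by
  induction v using List.reverseRecOn with
  | nil => simp [ell_nil]
  | append_singleton v a ih =>
    rcases eq_or_ne v [] with rfl | hv
    · rw [List.nil_append, ell_single, wp_apply]; simp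
    · rw [ell_concat K A hv a, MonoidAlgebra.coeff_sub, Finsupp.sub_apply, coeff_mul_letter_nil,
        coeff_letter_mul_nil, sub_zero]

lemma ell_coeff_letter (c : A) (v : List A) :
    (ell K A v).coeff (FreeMonoid.ofList [c]) = if v = [c] then 1 else 0 := by
  induction v using List.reverseRecOn with
  | nil => simp [ell_nil]
  | append_singleton v a ih =>
    rcases eq_or_ne v [] with rfl | hv
    · rw [List.nil_append, ell_single, wp_apply]
      by_cases h : a = c <;> simp [h, eq_comm]
    · have hne : v ++ [a] ≠ [c] := by
        intro h
        have := congrArg List.length h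
        simp at this
        exact hv this
      rw [ell_concat K A hv a, MonoidAlgebra.coeff_sub, Finsupp.sub_apply, if_neg hne]
      have h1 : (ell K A v * wp K A [a]).coeff (FreeMonoid.ofList [c]) = 0 := by
        rcases eq_or_ne c a with rfl | hca
        · have h' := coeff_mul_letter K A (ell K A v) c []
          simp only [List.nil_append] at h'
          rw [h', ell_coeff_nil]
        · have h' := coeff_mul_letter_ne K A (ell K A v) hca []
          simp only [List.nil_append] at h'
          exact h'
      have h2 : (wp K A [a] * ell K A v).coeff (FreeMonoid.ofList [c]) = 0 := by
        rcases eq_or_ne c a with rfl | hca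
        · rw [coeff_letter_mul, ell_coeff_nil]
        · exact coeff_letter_mul_ne K A _ hca []
      rw [h1, h2, sub_zero]

lemma ell_coeff_one (v : List A) : (ell K A v).coeff (1 : FreeMonoid A) = 0 :=
  ell_coeff_nil K A v

lemma adj_aux : ∀ n : ℕ, ∀ u : List A, u.length ≤ n → ∀ v : List A,
    (lam K A u).coeff (FreeMonoid.ofList v) = (ell K A v).coeff (FreeMonoid.ofList u) := by
  intro n
  induction n with
  | zero =>
    intro u hu v
    have hu0 : u = [] := List.length_eq_zero_iff.mp (Nat.le_zero.mp hu)
    subst hu0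
    simp [lam, ell_coeff_one]
  | succ n ih =>
    intro u hu v
    cases u with
    | nil => simp [lam, ell_coeff_one]
    | cons a s =>
      cases s with
      | nil => rw [lam, wp_apply, ell_coeff_letter]
      | cons b t =>
        rw [lam]
        set lb := (b :: t).getLast (by simp) with hlb
        set s' := (b :: t).dropLast with hs'
        have hlen1 : (a :: s').length ≤ n := by
          have : s'.length = t.length := by rw [hs']; simp
          simp only [List.length_cons, this]
          simp at hu
          omega
        have hlen2 : (b :: t).length ≤ n := by
          simp at hu ⊢
          omega
        have hdecomp : a :: b :: t = (a :: s') ++ [lb] := by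
          have h := List.dropLast_append_getLast (l := b :: t) (by simp)
          rw [hs', hlb, List.cons_append, h]
        rcases List.eq_nil_or_concat v with rfl | ⟨v', c, rfl⟩
        · rw [MonoidAlgebra.coeff_sub, Finsupp.sub_apply, coeff_mul_letter_nil, coeff_mul_letter_nil]
          simp [ell_nil]
        · simp only [List.concat_eq_append]
          have L1 : (lam K A (a :: s') * wp K A [lb]).coeff (FreeMonoid.ofList (v' ++ [c])) =
              if c = lb then (ell K A v').coeff (FreeMonoid.ofList (a :: s')) else 0 := by
            rcases eq_or_ne c lb with rfl | h
            · rw [coeff_mul_letter, ih _ hlen1, if_pos rfl]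
            · rw [coeff_mul_letter_ne K A _ h, if_neg h]
          have L2 : (lam K A (b :: t) * wp K A [a]).coeff (FreeMonoid.ofList (v' ++ [c])) =
              if c = a then (ell K A v').coeff (FreeMonoid.ofList (b :: t)) else 0 := by
            rcases eq_or_ne c a with rfl | h
            · rw [coeff_mul_letter, ih _ hlen2, if_pos rfl]
            · rw [coeff_mul_letter_ne K A _ h, if_neg h]
          rw [MonoidAlgebra.coeff_sub, Finsupp.sub_apply, L1, L2]
          rcases eq_or_ne v' [] with rfl | hv'
          · rw [List.nil_append, ell_single, wp_apply, if_neg (show ¬(a :: b :: t = [c]) by simp)]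
            simp [ell_nil]
          · rw [ell_concat K A hv' c, MonoidAlgebra.coeff_sub, Finsupp.sub_apply]
            have R1 : (ell K A v' * wp K A [c]).coeff (FreeMonoid.ofList (a :: b :: t)) =
                if c = lb then (ell K A v').coeff (FreeMonoid.ofList (a :: s')) else 0 := by
              rw [hdecomp]
              rcases eq_or_ne c lb with rfl | h
              · rw [coeff_mul_letter, if_pos rfl]
              · rw [coeff_mul_letter_ne K A _ (Ne.symm h), if_neg h]
            have R2 : (wp K A [c] * ell K A v').coeff (FreeMonoid.ofList (a :: b :: t)) =
                if c = a then (ell K A v').coeff (FreeMonoid.ofList (b :: t)) else 0 := by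
              rcases eq_or_ne c a with rfl | h
              · rw [coeff_letter_mul, if_pos rfl]
              · rw [coeff_letter_mul_ne K A _ (Ne.symm h), if_neg h]
            rw [R1, R2]

lemma adj (u v : List A) :
    (lam K A u).coeff (FreeMonoid.ofList v) = (ell K A v).coeff (FreeMonoid.ofList u) :=
  adj_aux K A u.length u le_rfl v

lemma ell_mem (v : List A) : ell K A v ∈ freeLie K A := by
  induction v using List.reverseRecOn with
  | nil => rw [ell_nil]; exact zero_mem _
  | append_singleton v a ih =>
    rcases eq_or_ne v [] with rfl | hv
    · rw [List.nil_append, ell_single]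
      exact LieSubalgebra.subset_lieSpan ⟨a, rfl⟩
    · rw [ell_concat K A hv a]
      have : ell K A v * wp K A [a] - wp K A [a] * ell K A v = ⁅ell K A v, wp K A [a]⁆ :=
        (Ring.lie_def _ _).symm
      rw [this]
      exact LieSubalgebra.lie_mem _ ih (LieSubalgebra.subset_lieSpan ⟨a, rfl⟩)

def Mspan : Submodule K (NC K A) := Submodule.span K (Set.range (ell K A))

lemma stab (a : A) (x : NC K A) (hx : x ∈ Mspan K A) :
    x * wp K A [a] - wp K A [a] * x ∈ Mspan K A := by
  induction hx using Submodule.span_induction with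
  | mem y hy =>
    obtain ⟨w, rfl⟩ := hy
    rcases eq_or_ne w [] with rfl | hw
    · rw [ell_nil]; simp only [zero_mul, mul_zero, sub_zero]
      exact zero_mem _
    · rw [← ell_concat K A hw a]
      exact Submodule.subset_span ⟨w ++ [a], rfl⟩
  | zero => simp only [zero_mul, mul_zero, sub_zero]; exact zero_mem _
  | add y z hy hz ihy ihz =>
    have : (y + z) * wp K A [a] - wp K A [a] * (y + z) =
        (y * wp K A [a] - wp K A [a] * y) + (z * wp K A [a] - wp K A [a] * z) := by
      noncomm_ring
    rw [this]; exact add_mem ihy ihz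
  | smul c y hy ihy =>
    have : (c • y) * wp K A [a] - wp K A [a] * (c • y) =
        c • (y * wp K A [a] - wp K A [a] * y) := by
      rw [smul_mul_assoc, mul_smul_comm, smul_sub]
    rw [this]; exact Submodule.smul_mem _ _ ihy

lemma bracket_mem : ∀ n : ℕ, ∀ v : List A, v.length ≤ n → ∀ u : List A,
    ell K A u * ell K A v - ell K A v * ell K A u ∈ Mspan K A := by
  intro n
  induction n with
  | zero =>
    intro v hv u
    have : v = [] := List.length_eq_zero_iff.mp (Nat.le_zero.mp hv)
    subst this
    rw [ell_nil]; simp only [mul_zero, zero_mul, sub_zero]; exact zero_mem _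
  | succ n ih =>
    intro v hv u
    rcases List.eq_nil_or_concat v with rfl | ⟨v', c, rfl⟩
    · rw [ell_nil]; simp only [mul_zero, zero_mul, sub_zero]; exact zero_mem _
    · simp only [List.concat_eq_append] at hv ⊢
      rcases eq_or_ne v' [] with rfl | hv'
      · rw [List.nil_append, ell_single]
        exact stab K A c _ (Submodule.subset_span ⟨u, rfl⟩)
      · rcases eq_or_ne u [] with rfl | hu
        · rw [ell_nil]
          simp only [mul_zero, zero_mul, sub_zero]
          exact zero_mem _
        · have hv'n : v'.length ≤ n := by
            rw [List.length_append] at hv; simp at hv; omega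
          have key : ell K A u * ell K A (v' ++ [c]) - ell K A (v' ++ [c]) * ell K A u =
              ((ell K A u * ell K A v' - ell K A v' * ell K A u) * wp K A [c] -
                wp K A [c] * (ell K A u * ell K A v' - ell K A v' * ell K A u)) -
              (ell K A (u ++ [c]) * ell K A v' - ell K A v' * ell K A (u ++ [c])) := by
            rw [ell_concat K A hv' c, ell_concat K A hu c]
            noncomm_ring
          rw [key]
          refine sub_mem ?_ (ih v' hv'n (u ++ [c]))
          exact stab K A c _ (ih v' hv'n u)

lemma mul_sub_mem (y : NC K A) (hy : y ∈ Mspan K A) :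
    ∀ x ∈ Mspan K A, x * y - y * x ∈ Mspan K A := by
  induction hy using Submodule.span_induction with
  | mem y hy =>
    obtain ⟨v, rfl⟩ := hy
    intro x hx
    induction hx using Submodule.span_induction with
    | mem x hx =>
      obtain ⟨u, rfl⟩ := hx
      exact bracket_mem K A v.length v le_rfl u
    | zero => simp only [zero_mul, mul_zero, sub_zero]; exact zero_mem _
    | add x z hx hz ihx ihz =>
      have : (x + z) * ell K A v - ell K A v * (x + z) =
          (x * ell K A v - ell K A v * x) + (z * ell K A v - ell K A v * z) := by
        noncomm_ring
      rw [this]; exact add_mem ihx ihz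
    | smul c x hx ihx =>
      have : (c • x) * ell K A v - ell K A v * (c • x) =
          c • (x * ell K A v - ell K A v * x) := by
        rw [smul_mul_assoc, mul_smul_comm, smul_sub]
      rw [this]; exact Submodule.smul_mem _ _ ihx
  | zero =>
    intro x hx
    simp only [zero_mul, mul_zero, sub_zero]; exact zero_mem _
  | add y z hy hz ihy ihz =>
    intro x hx
    have : x * (y + z) - (y + z) * x =
        (x * y - y * x) + (x * z - z * x) := by noncomm_ring
    rw [this]; exact add_mem (ihy x hx) (ihz x hx)
  | smul c y hy ihy =>
    intro x hx
    have : x * (c • y) - (c • y) * x = c • (x * y - y * x) := by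
      rw [smul_mul_assoc, mul_smul_comm, smul_sub]
    rw [this]; exact Submodule.smul_mem _ _ (ihy x hx)

def MLie : LieSubalgebra K (NC K A) :=
  { Mspan K A with
    lie_mem' := by
      intro x y hx hy
      show ⁅x, y⁆ ∈ Mspan K A
      rw [Ring.lie_def]
      exact mul_sub_mem K A y hy x hx }

lemma freeLie_le_Mspan (Q : NC K A) (hQ : Q ∈ freeLie K A) : Q ∈ Mspan K A := by
  have hle : freeLie K A ≤ MLie K A := by
    rw [freeLie, LieSubalgebra.lieSpan_le]
    rintro x ⟨a, rfl⟩
    show wp K A [a] ∈ Mspan K A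
    exact Submodule.subset_span ⟨[a], rfl⟩
  exact hle hQ

lemma lamLin_apply (P : NC K A) (v : List A) :
    (lamLin K A P).coeff (FreeMonoid.ofList v) = sp K A P (ell K A v) := by
  rw [lamLin, LinearMap.comp_apply]
  erw [Finsupp.linearCombination_apply]
  rw [sp, MonoidAlgebra.coeff_finsuppSum, Finsupp.sum_apply]
  refine Finsupp.sum_congr fun w _ => ?_
  rw [MonoidAlgebra.coeff_smul_apply, smul_eq_mul]
  congr 1
  rw [adj K A (FreeMonoid.toList w) v, FreeMonoid.ofList_toList]

lemma sp_zero (P : NC K A) : sp K A P 0 = 0 := by simp [sp]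

lemma sp_add (P Q R : NC K A) : sp K A P (Q + R) = sp K A P Q + sp K A P R := by
  rw [sp, sp, sp, Finsupp.sum, Finsupp.sum, Finsupp.sum, ← Finset.sum_add_distrib]
  refine Finset.sum_congr rfl fun x _ => ?_
  show P.coeff x * (Q.coeff x + R.coeff x) = P.coeff x * Q.coeff x + P.coeff x * R.coeff x
  exact mul_add _ _ _

lemma sp_smul (c : K) (P Q : NC K A) : sp K A P (c • Q) = c * sp K A P Q := by
  rw [sp, sp, Finsupp.mul_sum]
  refine Finsupp.sum_congr fun w _ => ?_
  rw [MonoidAlgebra.coeff_smul_apply, smul_eq_mul]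
  ring


end AuxProof

theorem ker_lam_eq_orthogonal_freeLie
    (K A : Type*) [CommRing K] [Fintype A] :
    (∀ P : NC K A, lamLin K A P = 0 ↔ ∀ Q ∈ freeLie K A, sp K A P Q = 0) ∧
    (∀ w : List A, lam K A w = 0 ↔ ¬ ∃ P ∈ freeLie K A, coeffW K A P w ≠ 0) := by
  constructor
  · intro P
    constructor
    · intro h Q hQ
      have hQM := freeLie_le_Mspan K A Q hQ
      clear hQ
      induction hQM using Submodule.span_induction with
      | mem Q hQ =>
        obtain ⟨v, rfl⟩ := hQ
        rw [← lamLin_apply, h]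
        rfl
      | zero => exact sp_zero K A P
      | add Q R hQ hR ihQ ihR => rw [sp_add, ihQ, ihR, add_zero]
      | smul c Q hQ ihQ => rw [sp_smul, ihQ, mul_zero]
    · intro h
      apply MonoidAlgebra.ext
      apply Finsupp.ext
      intro g
      have h2 := h (ell K A (FreeMonoid.toList g)) (ell_mem K A _)
      rw [← lamLin_apply K A P (FreeMonoid.toList g), FreeMonoid.ofList_toList] at h2
      simpa using h2
  · intro w
    constructor
    · intro h hex
      obtain ⟨P, hP, hne⟩ := hex
      apply hne
      have hPM := freeLie_le_Mspan K A P hP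
      clear hP hne
      induction hPM using Submodule.span_induction with
      | mem P hP =>
        obtain ⟨v, rfl⟩ := hP
        show (ell K A v).coeff (FreeMonoid.ofList w) = 0
        rw [← adj K A w v, h]
        rfl
      | zero =>
        show (0 : NC K A).coeff (FreeMonoid.ofList w) = 0
        rfl
      | add P Q hP hQ ihP ihQ =>
        show (P + Q).coeff (FreeMonoid.ofList w) = 0
        have e1 : P.coeff (FreeMonoid.ofList w) = 0 := ihP
        have e2 : Q.coeff (FreeMonoid.ofList w) = 0 := ihQ
        rw [MonoidAlgebra.coeff_add, Finsupp.add_apply, e1, e2, add_zero]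
      | smul c P hP ihP =>
        show (c • P).coeff (FreeMonoid.ofList w) = 0
        have e1 : P.coeff (FreeMonoid.ofList w) = 0 := ihP
        rw [MonoidAlgebra.coeff_smul_apply, e1, smul_zero]
    · intro h
      apply MonoidAlgebra.ext
      apply Finsupp.ext
      intro g
      have h2 : (ell K A (FreeMonoid.toList g)).coeff (FreeMonoid.ofList w) = 0 := by
        by_contra hne
        exact h ⟨ell K A (FreeMonoid.toList g), ell_mem K A _, hne⟩
      have h3 := (adj K A w (FreeMonoid.toList g)).trans h2
      rw [FreeMonoid.ofList_toList] at h3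
      simpa using h3
end

section
/- Let K be a commutative ring with unity, A a finite alphabet, w a word over A and r a positive integer with r ≤ |w|. Then λ(w) = Σ λ(u) · (−1)^{|s|} (s̃ ⧢ t), where the sum ranges over all factorizations w = s u t with |u| = r (each occurrence counted separately), λ(u)·(s̃ ⧢ t) denotes the concatenation product in K⟨A⟩, and s̃ is the reversal of s. -/
open scoped BigOperators
open Classical

noncomputable section

variable (K A : Type*) [CommRing K]

attribute [local instance] LieRing.ofAssociativeRing

end

noncomputable section AuxLemmas

variable (K A : Type*) [CommRing K]

-- lemmas
lemma wp_append (u v : List A) : wp K A (u ++ v) = wp K A u * wp K A v := by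
  simp [wp, MonoidAlgebra.single_mul_single]

lemma wp_nil : wp K A ([] : List A) = 1 := rfl

lemma wp_cons (x : A) (l : List A) : wp K A (x :: l) = wp K A [x] * wp K A l :=
  wp_append K A [x] l

lemma shuffleW_nil_left (v : List A) : shuffleW K A [] v = wp K A v := by
  cases v <;> rw [shuffleW]

lemma shuffleW_nil_right (u : List A) : shuffleW K A u [] = wp K A u := by
  cases u <;> rw [shuffleW] <;> simp

lemma shuffleW_cons_cons (a b : A) (u v : List A) :
    shuffleW K A (a :: u) (b :: v) =
      wp K A [a] * shuffleW K A u (b :: v) + wp K A [b] * shuffleW K A (a :: u) v := by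
  rw [shuffleW]

lemma shuffleW_nil_concat (q : List A) (b : A) :
    shuffleW K A [] (q ++ [b]) = shuffleW K A [] q * wp K A [b] := by
  rw [shuffleW_nil_left, shuffleW_nil_left, ← wp_append]

lemma shuffleW_concat_nil (p : List A) (a : A) :
    shuffleW K A (p ++ [a]) [] = shuffleW K A p [] * wp K A [a] := by
  rw [shuffleW_nil_right, shuffleW_nil_right, ← wp_append]

lemma shuffleW_concat_concat_aux (n : ℕ) : ∀ (p q : List A) (a b : A),
    p.length + q.length ≤ n →
    shuffleW K A (p ++ [a]) (q ++ [b]) =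
      shuffleW K A p (q ++ [b]) * wp K A [a] + shuffleW K A (p ++ [a]) q * wp K A [b] := by
  induction n with
  | zero =>
    rintro p q a b h
    obtain ⟨rfl, rfl⟩ : p = [] ∧ q = [] := by
      constructor <;> [skip; skip] <;>
        · cases p <;> cases q <;> simp_all
    simp only [List.nil_append, shuffleW_cons_cons, shuffleW_nil_left, shuffleW_nil_right,
      ← wp_append]
    simp [add_comm]
  | succ n IH =>
    rintro p q a b h
    match p, q with
    | [], [] =>
      simp only [List.nil_append, shuffleW_cons_cons, shuffleW_nil_left, shuffleW_nil_right,
        ← wp_append]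
      simp [add_comm]
    | [], d :: q' =>
      have hIH := IH [] q' a b (by simp at h ⊢; omega)
      simp only [List.nil_append, List.cons_append, shuffleW_cons_cons, shuffleW_nil_left] at *
      rw [hIH]
      simp only [wp_append, List.singleton_append] at *
      rw [wp_cons K A d (q' ++ [b]), wp_append, wp_cons K A d q']
      noncomm_ring
    | c :: p', [] =>
      have hIH := IH p' [] a b (by simp at h ⊢; omega)
      simp only [List.nil_append, List.cons_append, shuffleW_cons_cons, shuffleW_nil_left,
        shuffleW_nil_right] at *
      rw [hIH]
      simp only [wp_append, List.singleton_append] at *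
      rw [wp_cons K A c (p' ++ [a]), wp_append, wp_cons K A c p']
      noncomm_ring
    | c :: p', d :: q' =>
      have h1 := IH p' (d :: q') a b (by simp at h ⊢; omega)
      have h2 := IH (c :: p') q' a b (by simp at h ⊢; omega)
      simp only [List.cons_append, shuffleW_cons_cons] at *
      rw [h1, h2]
      noncomm_ring

lemma shuffleW_concat_concat (p q : List A) (a b : A) :
    shuffleW K A (p ++ [a]) (q ++ [b]) =
      shuffleW K A p (q ++ [b]) * wp K A [a] + shuffleW K A (p ++ [a]) q * wp K A [b] :=
  shuffleW_concat_concat_aux K A (p.length + q.length) p q a b le_rfl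


lemma lam_step (w : List A) (h2 : 2 ≤ w.length) (hne : w ≠ []) :
    lam K A w = lam K A w.dropLast * wp K A [w.getLast hne] -
      lam K A (w.drop 1) * wp K A [w.head hne] := by
  match w with
  | a :: b :: t =>
    rw [lam]
    simp [List.getLast_cons]

-- list helpers
lemma drop_take_dropLast (w : List A) (i r : ℕ) (h : i + r ≤ w.length - 1) :
    ((w.dropLast.drop i).take r) = (w.drop i).take r := by
  rw [List.dropLast_eq_take, List.drop_take]
  rw [List.take_take]
  congr 1
  omega

lemma take_dropLast (w : List A) (i : ℕ) (h : i ≤ w.length - 1) :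
    w.dropLast.take i = w.take i := by
  rw [List.dropLast_eq_take, List.take_take]
  congr 1
  omega

lemma dropLast_drop (w : List A) (k : ℕ) : w.dropLast.drop k = (w.drop k).dropLast := by
  rw [List.dropLast_eq_take, List.drop_take, List.dropLast_eq_take, List.length_drop]
  congr 1
  omega

lemma getLast_drop (w : List A) (k : ℕ) (h : w.drop k ≠ []) (hw : w ≠ []) :
    (w.drop k).getLast h = w.getLast hw := by
  have h1 := List.getLast?_eq_getLast (l := w.drop k) h
  have h2 := List.getLast?_eq_getLast (l := w) hw
  have h3 : w.getLast? = (w.drop k).getLast? := by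
    conv_lhs => rw [← List.take_append_drop k w]
    exact List.getLast?_append_of_ne_nil _ h
  rw [h1, h2] at h3
  exact (Option.some.inj h3).symm

lemma take_head (w : List A) (j : ℕ) (hj : 1 ≤ j) (hne : w ≠ []) :
    w.take j = w.head hne :: ((w.drop 1).take (j - 1)) := by
  match w, j with
  | a :: t, j + 1 => simp

lemma main_aux (n : ℕ) : ∀ (w : List A) (r : ℕ), 1 ≤ r → r ≤ w.length → w.length ≤ n →
    lam K A w =
      ∑ i ∈ Finset.range (w.length - r + 1),
        lam K A ((w.drop i).take r) *
          ((-1 : K) ^ i • shuffleW K A (w.take i).reverse (w.drop (i + r))) := by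
  induction n with
  | zero => intro w r h1 h2 h3; omega
  | succ n IH =>
    intro w r hr hrw hn
    rcases eq_or_lt_of_le hrw with heq | hlt
    · -- base: r = w.length
      have e1 : w.length - r + 1 = 1 := by omega
      rw [e1, Finset.sum_range_one]
      simp only [List.drop_zero, List.take_zero, List.reverse_nil, pow_zero, one_smul, zero_add]
      rw [List.take_of_length_le (le_of_eq heq.symm),
        List.drop_eq_nil_of_le (le_of_eq heq.symm), shuffleW_nil_left, wp_nil, mul_one]
    · -- step: r < w.length
      have hL2 : 2 ≤ w.length := by omega
      have hne : w ≠ [] := by rintro rfl; simp at hL2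
      set L := w.length with hLdef
      set N := L - r with hNdef
      have hN1 : 1 ≤ N := by omega
      rw [lam_step K A w hL2 hne]
      have hw1len : w.dropLast.length = L - 1 := by simp [hLdef]
      have hw2len : (w.drop 1).length = L - 1 := by simp [hLdef]
      rw [IH w.dropLast r hr (by omega) (by omega),
        IH (w.drop 1) r hr (by omega) (by omega)]
      rw [hw1len, hw2len]
      have e2 : L - 1 - r + 1 = N := by omega
      have e3 : L - r + 1 = N + 1 := by omega
      rw [e2, e3]
      have key : ∀ j ∈ Finset.range (N + 1),
          lam K A ((w.drop j).take r) *
            ((-1 : K) ^ j • shuffleW K A (w.take j).reverse (w.drop (j + r)))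
          = (if j < N then
              lam K A ((w.dropLast.drop j).take r) *
                ((-1 : K) ^ j •
                  shuffleW K A (w.dropLast.take j).reverse (w.dropLast.drop (j + r))) *
                wp K A [w.getLast hne]
            else 0)
          + (if j = 0 then 0 else
              -(lam K A (((w.drop 1).drop (j - 1)).take r) *
                ((-1 : K) ^ (j - 1) •
                  shuffleW K A ((w.drop 1).take (j - 1)).reverse ((w.drop 1).drop (j - 1 + r))) *
                wp K A [w.head hne])) := by
        intro j hj
        simp only [Finset.mem_range] at hj
        rcases Nat.eq_zero_or_pos j with rfl | hj1
        · rw [if_pos (by omega : 0 < N), if_pos rfl, add_zero]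
          simp only [List.drop_zero, List.take_zero, List.reverse_nil, pow_zero, one_smul,
            zero_add]
          have hdr : w.drop r ≠ [] := by
            intro h; have := congrArg List.length h; simp [hLdef] at this; omega
          rw [take_dropLast A w r (by omega), dropLast_drop A w r]
          conv_lhs => rw [← List.dropLast_append_getLast hdr]
          rw [shuffleW_nil_concat, getLast_drop A w r hdr hne, mul_assoc]
        · -- j ≥ 1
          have hsplit1 : (w.take j).reverse =
              ((w.drop 1).take (j - 1)).reverse ++ [w.head hne] := by
            rw [take_head A w j hj1 hne, List.reverse_cons]
          have hdd : (w.drop 1).drop (j - 1) = w.drop j := by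
            rw [List.drop_drop]; congr 1; omega
          have hdd2 : (w.drop 1).drop (j - 1 + r) = w.drop (j + r) := by
            rw [List.drop_drop]; congr 1; omega
          have hpow : ((-1 : K)) ^ j = -((-1 : K) ^ (j - 1)) := by
            have hj' : j - 1 + 1 = j := by omega
            have hps := pow_succ (-1 : K) (j - 1)
            rw [hj'] at hps
            rw [hps]; ring
          rcases lt_or_ge j N with hjN | hjN
          · rw [if_pos hjN, if_neg (by omega)]
            have hd : w.drop (j + r) ≠ [] := by
              intro h; have := congrArg List.length h; simp [hLdef] at this; omega
            have hsplit2 : (w.drop (j + r)).dropLast ++ [w.getLast hne] = w.drop (j + r) := by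
              rw [← getLast_drop A w (j + r) hd hne]
              exact List.dropLast_append_getLast hd
            rw [drop_take_dropLast A w j r (by omega), take_dropLast A w j (by omega),
              dropLast_drop A w (j + r), hdd, hdd2]
            rw [hsplit1, ← hsplit2, shuffleW_concat_concat]
            have hq : (w.drop (j + r)).dropLast ++ [w.getLast hne] = w.drop (j + r) := hsplit2
            simp only [List.dropLast_concat, hpow, neg_smul, smul_add, mul_add, mul_smul_comm,
              smul_mul_assoc, mul_assoc, neg_neg, mul_neg, neg_mul]
            abel
          · -- j = N
            have hjN' : j = N := by omega
            rw [if_neg (by omega), if_neg (by omega), zero_add]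
            have hdrop : w.drop (j + r) = [] := List.drop_eq_nil_of_le (by omega)
            rw [hdrop, hdd, hdd2, hdrop, hsplit1, shuffleW_concat_nil]
            simp only [hpow, neg_smul, mul_smul_comm, smul_mul_assoc, mul_assoc, neg_neg,
              mul_neg, neg_mul]
        
      have hP : (∑ j ∈ Finset.range (N + 1), (if j < N then
              lam K A ((w.dropLast.drop j).take r) *
                ((-1 : K) ^ j •
                  shuffleW K A (w.dropLast.take j).reverse (w.dropLast.drop (j + r))) *
                wp K A [w.getLast hne]
            else 0)) =
          (∑ i ∈ Finset.range N,
            lam K A ((w.dropLast.drop i).take r) *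
              ((-1 : K) ^ i •
                shuffleW K A (w.dropLast.take i).reverse (w.dropLast.drop (i + r)))) *
            wp K A [w.getLast hne] := by
        rw [Finset.sum_range_succ, if_neg (lt_irrefl N), add_zero, Finset.sum_mul]
        refine Finset.sum_congr rfl fun j hj => ?_
        rw [if_pos (Finset.mem_range.mp hj)]
      have hQ : (∑ j ∈ Finset.range (N + 1), (if j = 0 then 0 else
              -(lam K A (((w.drop 1).drop (j - 1)).take r) *
                ((-1 : K) ^ (j - 1) •
                  shuffleW K A ((w.drop 1).take (j - 1)).reverse
                    ((w.drop 1).drop (j - 1 + r))) *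
                wp K A [w.head hne]))) =
          -((∑ i ∈ Finset.range N,
              lam K A (((w.drop 1).drop i).take r) *
                ((-1 : K) ^ i •
                  shuffleW K A ((w.drop 1).take i).reverse ((w.drop 1).drop (i + r)))) *
              wp K A [w.head hne]) := by
        rw [Finset.sum_range_succ', if_pos rfl, add_zero]
        simp only [Nat.add_sub_cancel, Nat.succ_ne_zero, if_false]
        rw [Finset.sum_mul, ← Finset.sum_neg_distrib]
      rw [Finset.sum_congr rfl key, Finset.sum_add_distrib, hP, hQ, ← sub_eq_add_neg]

end AuxLemmas

theorem lam_eq_sum_over_factors_of_length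
    (K A : Type*) [CommRing K] [Fintype A] (w : List A) (r : ℕ) (hr : 1 ≤ r) (hrw : r ≤ w.length) :
    lam K A w =
      ∑ i ∈ Finset.range (w.length - r + 1),
        lam K A ((w.drop i).take r) *
          ((-1 : K) ^ i • shuffleW K A (w.take i).reverse (w.drop (i + r))) :=
  main_aux K A w.length w r hr hrw le_rfl
end
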